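/- Suppose the functions α, β, γ, δ, ε, κ₁, κ₂, μ (of t, with μ > 0) satisfy the modified Riccati system: α' + b = 2cα + 4aα², β' = (c+4aα)β, γ' = aβ², δ' + 2αg = (c+4aα)δ + f, ε' = (2aδ−g)β, κ₁' = aδ² − gδ + h·e^{κ₂}, κ₂' = −h·e^{κ₂}, and μ'/μ = −4aα − 2d. Then for any fixed real parameter y, the functions ψ(x,t) = μ^{−1/2}e^{αx² + βxy + γy² + δx + εy + κ₁} and φ(x,t) = μ^{−1/2}e^{αx² + βxy + γy² + δx + εy + κ₁ + κ₂} satisfy ψ_t = aψ_{xx} − (bx² − d − xf)ψ − (g − cx)ψ_x + hφ and φ_t = aφ_{xx} − (bx² − d − xf)φ − (g − cx)φ_x. -/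

import Mathlib

open Real

lemma master (A B G D E K M : ℝ → ℝ)
    (hA : Differentiable ℝ A) (hB : Differentiable ℝ B) (hG : Differentiable ℝ G)
    (hD : Differentiable ℝ D) (hE : Differentiable ℝ E) (hK : Differentiable ℝ K)
    (hM : Differentiable ℝ M) (hMpos : ∀ t, 0 < M t) (y : ℝ)
    (P : ℝ → ℝ → ℝ)
    (hP : P = fun x t => (M t) ^ (-(1:ℝ)/2) *
      Real.exp (A t * x ^ 2 + B t * x * y + G t * y ^ 2 + D t * x + E t * y + K t)) :
    ∀ x t : ℝ,
      deriv (fun w => P w t) x = P x t * (2 * A t * x + B t * y + D t) ∧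
      deriv (fun w => deriv (fun z => P z t) w) x
        = P x t * ((2 * A t * x + B t * y + D t) ^ 2 + 2 * A t) ∧
      deriv (P x) t = P x t * (-(1/2) * (deriv M t / M t) + deriv A t * x ^ 2
        + deriv B t * x * y + deriv G t * y ^ 2 + deriv D t * x + deriv E t * y + deriv K t) := by
  subst hP
  have hx : ∀ x t : ℝ, HasDerivAt (fun w => (M t) ^ (-(1:ℝ)/2) *
      Real.exp (A t * w ^ 2 + B t * w * y + G t * y ^ 2 + D t * w + E t * y + K t))
      (((M t) ^ (-(1:ℝ)/2) *
        Real.exp (A t * x ^ 2 + B t * x * y + G t * y ^ 2 + D t * x + E t * y + K t))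
        * (2 * A t * x + B t * y + D t)) x := by
    intro x t
    have hexp : HasDerivAt (fun w : ℝ => A t * w ^ 2 + B t * w * y + G t * y ^ 2 + D t * w + E t * y + K t)
        (2 * A t * x + B t * y + D t) x := by
      have h1 : HasDerivAt (fun w : ℝ => A t * w ^ 2) (A t * (2 * x)) x :=
        ((hasDerivAt_pow 2 x).const_mul (A t)).congr_deriv (by push_cast; ring)
      have h2 : HasDerivAt (fun w : ℝ => B t * w * y) (B t * y) x := by
        simpa using ((hasDerivAt_id x).const_mul (B t)).mul_const y |>.congr_deriv (by ring)
      have h3 : HasDerivAt (fun w : ℝ => D t * w) (D t) x := by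
        simpa using (hasDerivAt_id x).const_mul (D t)
      have := (((h1.add h2).add_const (G t * y ^ 2)).add h3).add_const (E t * y + K t)
      exact (this.congr_deriv (by ring)).congr_of_eventuallyEq
        (Filter.Eventually.of_forall fun w => by simp only [Pi.add_apply]; ring)
    have := (hexp.exp).const_mul ((M t) ^ (-(1:ℝ)/2))
    exact this.congr_deriv (by ring)
  intro x t
  refine ⟨(hx x t).deriv, ?_, ?_⟩
  · have : (fun w => deriv (fun z => (M t) ^ (-(1:ℝ)/2) *
        Real.exp (A t * z ^ 2 + B t * z * y + G t * y ^ 2 + D t * z + E t * y + K t)) w)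
        = fun w => ((M t) ^ (-(1:ℝ)/2) *
        Real.exp (A t * w ^ 2 + B t * w * y + G t * y ^ 2 + D t * w + E t * y + K t))
        * (2 * A t * w + B t * y + D t) := by
      funext w; exact (hx w t).deriv
    rw [this]
    have hlin : HasDerivAt (fun w : ℝ => 2 * A t * w + B t * y + D t) (2 * A t) x := by
      have heq : (fun w : ℝ => 2 * A t * w + B t * y + D t)
          = fun w : ℝ => 2 * A t * id w + (B t * y + D t) := by funext w; simp [id]; ring
      rw [heq]
      simpa using ((hasDerivAt_id x).const_mul (2 * A t)).add_const (B t * y + D t)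
    have := (hx x t).mul hlin
    refine this.deriv.trans ?_; ring
  · -- t derivative
    have hMt : HasDerivAt (fun s => (M s) ^ (-(1:ℝ)/2))
        ((-(1:ℝ)/2) * (M t) ^ ((-(1:ℝ)/2) - 1) * deriv M t) t := by
      have h0 : HasDerivAt (fun u : ℝ => u ^ (-(1:ℝ)/2))
          ((-(1:ℝ)/2) * (M t) ^ ((-(1:ℝ)/2) - 1)) (M t) :=
        Real.hasDerivAt_rpow_const (Or.inl (hMpos t).ne')
      exact h0.comp t (hM t).hasDerivAt
    have hexp : HasDerivAt (fun s => Real.exp (A s * x ^ 2 + B s * x * y + G s * y ^ 2 + D s * x + E s * y + K s))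
        (Real.exp (A t * x ^ 2 + B t * x * y + G t * y ^ 2 + D t * x + E t * y + K t)
          * (deriv A t * x ^ 2 + deriv B t * x * y + deriv G t * y ^ 2 + deriv D t * x + deriv E t * y + deriv K t)) t := by
      have : HasDerivAt (fun s => A s * x ^ 2 + B s * x * y + G s * y ^ 2 + D s * x + E s * y + K s)
          (deriv A t * x ^ 2 + deriv B t * x * y + deriv G t * y ^ 2 + deriv D t * x + deriv E t * y + deriv K t) t := by
        exact ((((((hA t).hasDerivAt.mul_const (x ^ 2)).add
          (((hB t).hasDerivAt.mul_const x).mul_const y)).add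
          ((hG t).hasDerivAt.mul_const (y ^ 2))).add
          ((hD t).hasDerivAt.mul_const x)).add
          ((hE t).hasDerivAt.mul_const y)).add (hK t).hasDerivAt
      exact this.exp
    have hprod := hMt.mul hexp
    refine hprod.deriv.trans ?_
    have hrp : (M t) ^ ((-(1:ℝ)/2) - 1) = (M t) ^ (-(1:ℝ)/2) / M t := by
      rw [Real.rpow_sub (hMpos t), Real.rpow_one]
    rw [hrp]
    field_simp
    ring


theorem stmt15
    (a b c d f g h : ℝ → ℝ)
    (ha : Continuous a) (hb : Continuous b) (hc : Continuous c) (hd : Continuous d)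
    (hf : Continuous f) (hgc : Continuous g) (hhc : Continuous h)
    (α β γ δ ε κ₁ κ₂ μ : ℝ → ℝ)
    (hdiff : Differentiable ℝ α ∧ Differentiable ℝ β ∧ Differentiable ℝ γ ∧
      Differentiable ℝ δ ∧ Differentiable ℝ ε ∧ Differentiable ℝ κ₁ ∧
      Differentiable ℝ κ₂ ∧ Differentiable ℝ μ)
    (hμpos : ∀ t, 0 < μ t)
    (hα : ∀ t, deriv α t + b t = 2 * c t * α t + 4 * a t * (α t) ^ 2)
    (hβ : ∀ t, deriv β t = (c t + 4 * a t * α t) * β t)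
    (hγ : ∀ t, deriv γ t = a t * (β t) ^ 2)
    (hδ : ∀ t, deriv δ t + 2 * α t * g t = (c t + 4 * a t * α t) * δ t + f t)
    (hε : ∀ t, deriv ε t = (2 * a t * δ t - g t) * β t)
    (hκ₁ : ∀ t, deriv κ₁ t = a t * (δ t) ^ 2 - g t * δ t + h t * Real.exp (κ₂ t))
    (hκ₂ : ∀ t, deriv κ₂ t = -h t * Real.exp (κ₂ t))
    (hμ : ∀ t, deriv μ t / μ t = -(4 * a t * α t) - 2 * d t)
    (y : ℝ) (ψ φ : ℝ → ℝ → ℝ)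
    (hψ : ψ = fun x t => (μ t) ^ (-(1 : ℝ) / 2) *
      Real.exp (α t * x ^ 2 + β t * x * y + γ t * y ^ 2 + δ t * x + ε t * y + κ₁ t))
    (hφ : φ = fun x t => (μ t) ^ (-(1 : ℝ) / 2) *
      Real.exp (α t * x ^ 2 + β t * x * y + γ t * y ^ 2 + δ t * x + ε t * y + κ₁ t + κ₂ t)) :
    (∀ x t : ℝ, deriv (ψ x) t =
      a t * deriv (fun w => deriv (fun z => ψ z t) w) x
        - (b t * x ^ 2 - d t - x * f t) * ψ x t
        - (g t - c t * x) * deriv (fun w => ψ w t) x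
        + h t * φ x t) ∧
    (∀ x t : ℝ, deriv (φ x) t =
      a t * deriv (fun w => deriv (fun z => φ z t) w) x
        - (b t * x ^ 2 - d t - x * f t) * φ x t
        - (g t - c t * x) * deriv (fun w => φ w t) x) := by
  obtain ⟨d1, d2, d3, d4, d5, d6, d7, d8⟩ := hdiff
  have hφ' : φ = fun x t => (μ t) ^ (-(1 : ℝ) / 2) *
      Real.exp (α t * x ^ 2 + β t * x * y + γ t * y ^ 2 + δ t * x + ε t * y
        + (fun s => κ₁ s + κ₂ s) t) := by
    rw [hφ]; funext x t; simp [add_assoc]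
  have mψ := master α β γ δ ε κ₁ μ d1 d2 d3 d4 d5 d6 d8 hμpos y ψ hψ
  have mφ := master α β γ δ ε (fun s => κ₁ s + κ₂ s) μ d1 d2 d3 d4 d5 (d6.add d7) d8
    hμpos y φ hφ'
  have hK : ∀ t, deriv (fun s => κ₁ s + κ₂ s) t = deriv κ₁ t + deriv κ₂ t := by
    intro t; exact deriv_add (d6 t) (d7 t)
  have hφψ : ∀ x t, φ x t = ψ x t * Real.exp (κ₂ t) := by
    intro x t; rw [hψ, hφ]; simp [Real.exp_add]; ring
  constructor
  · intro x t
    have eα : deriv α t = 2 * c t * α t + 4 * a t * (α t) ^ 2 - b t := by linarith [hα t]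
    have eδ : deriv δ t = (c t + 4 * a t * α t) * δ t + f t - 2 * α t * g t := by
      linarith [hδ t]
    rw [(mψ x t).2.2, (mψ x t).2.1, (mψ x t).1, hφψ x t, hμ t, eα, eδ, hβ t, hγ t, hε t,
      hκ₁ t]
    ring
  · intro x t
    have eα : deriv α t = 2 * c t * α t + 4 * a t * (α t) ^ 2 - b t := by linarith [hα t]
    have eδ : deriv δ t = (c t + 4 * a t * α t) * δ t + f t - 2 * α t * g t := by
      linarith [hδ t]
    rw [(mφ x t).2.2, (mφ x t).2.1, (mφ x t).1, hK t, hμ t, eα, eδ, hβ t, hγ t, hε t,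
      hκ₁ t, hκ₂ t]
    ring
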